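/- arXiv:1310.0309 — 7 statements merged into one kernel-verified Lean document; each statement's English description precedes it below -/
import Mathlib

section
/- Let β > 1 be a real number and suppose the Rényi expansion of 1 in base β is ultimately periodic, say d*_β(1) = u v^ω with v nonempty. Set k = |u| + |v|. Then for every infinite binary word w of the form 0^{n_1} 1 0^{n_2} 1 0^{n_3} ⋯ with n_i ≥ k for all i ≥ 1, the word w is the β-expansion of some real number x ∈ [0,1); that is, every shift σ^m(w) is lexicographically smaller than d*_β(1). -/
/-- Strict lexicographic order on infinite words over ℕ. -/
def LexLT (a b : ℕ → ℕ) : Prop := ∃ p, (∀ i < p, a i = b i) ∧ a p < b p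

/-- Non-strict lexicographic order. -/
def LexLE (a b : ℕ → ℕ) : Prop := a = b ∨ LexLT a b

/-- `d` is the Rényi (quasi-greedy) expansion of 1 in base β: a word over
{0,...,⌈β⌉-1} not ending in 0^ω, of value 1, lexicographically greatest among such. -/
def IsRenyiExpansionOfOne (β : ℝ) (d : ℕ → ℕ) : Prop :=
  (∀ i, d i ≤ ⌈β⌉₊ - 1) ∧
  HasSum (fun i : ℕ => (d i : ℝ) / β ^ (i + 1)) 1 ∧
  (∀ N, ∃ i ≥ N, d i ≠ 0) ∧
  ∀ d' : ℕ → ℕ, (∀ i, d' i ≤ ⌈β⌉₊ - 1) →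
    HasSum (fun i : ℕ => (d' i : ℝ) / β ^ (i + 1)) 1 →
    (∀ N, ∃ i ≥ N, d' i ≠ 0) → LexLE d' d


noncomputable def qgr (β : ℝ) : ℕ → ℝ
  | 0 => 1
  | n+1 => β * qgr β n - ((⌈β * qgr β n⌉₊ : ℝ) - 1)

noncomputable def qgd (β : ℝ) (n : ℕ) : ℕ := ⌈β * qgr β n⌉₊ - 1

lemma qgr_pos_le (β : ℝ) (hβ : 1 < β) : ∀ n, 0 < qgr β n ∧ qgr β n ≤ 1 := by
  intro n
  induction n with
  | zero => simp [qgr]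
  | succ n ih =>
    obtain ⟨h0, h1⟩ := ih
    have hx : 0 < β * qgr β n := mul_pos (lt_trans one_pos hβ) h0
    have hc1 : (β * qgr β n : ℝ) ≤ (⌈β * qgr β n⌉₊ : ℝ) := Nat.le_ceil _
    have hc2 : ((⌈β * qgr β n⌉₊ : ℕ) : ℝ) < β * qgr β n + 1 := Nat.ceil_lt_add_one hx.le
    constructor
    · show 0 < β * qgr β n - ((⌈β * qgr β n⌉₊ : ℝ) - 1)
      linarith
    · show β * qgr β n - ((⌈β * qgr β n⌉₊ : ℝ) - 1) ≤ 1
      linarith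

lemma qgd_cast (β : ℝ) (hβ : 1 < β) (n : ℕ) :
    (qgd β n : ℝ) = (⌈β * qgr β n⌉₊ : ℝ) - 1 := by
  have hx : 0 < β * qgr β n := mul_pos (lt_trans one_pos hβ) (qgr_pos_le β hβ n).1
  have h1 : 1 ≤ ⌈β * qgr β n⌉₊ := Nat.ceil_pos.mpr hx
  unfold qgd
  push_cast [Nat.cast_sub h1]
  ring

lemma qgr_succ (β : ℝ) (hβ : 1 < β) (n : ℕ) :
    qgr β (n + 1) = β * qgr β n - (qgd β n : ℝ) := by
  rw [qgd_cast β hβ]; rfl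

lemma qgd_le (β : ℝ) (hβ : 1 < β) (n : ℕ) : qgd β n ≤ ⌈β⌉₊ - 1 := by
  have h : β * qgr β n ≤ β :=
    mul_le_of_le_one_right (le_of_lt (lt_trans one_pos hβ)) (qgr_pos_le β hβ n).2
  exact Nat.sub_le_sub_right (Nat.ceil_le_ceil h) 1

lemma qg_partial (β : ℝ) (hβ : 1 < β) (n : ℕ) :
    ∑ i ∈ Finset.range n, (qgd β i : ℝ) / β ^ (i + 1) = 1 - qgr β n / β ^ n := by
  have hβ0 : (0:ℝ) < β := lt_trans one_pos hβ
  induction n with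
  | zero => simp [qgr]
  | succ n ih =>
    rw [Finset.sum_range_succ, ih, qgr_succ β hβ n]
    have hpow : (β : ℝ) ^ n ≠ 0 := pow_ne_zero _ hβ0.ne'
    field_simp
    ring

lemma qg_hasSum (β : ℝ) (hβ : 1 < β) :
    HasSum (fun i : ℕ => (qgd β i : ℝ) / β ^ (i + 1)) 1 := by
  have hβ0 : (0:ℝ) < β := lt_trans one_pos hβ
  rw [hasSum_iff_tendsto_nat_of_nonneg (fun i => by positivity)]
  have key : Filter.Tendsto (fun n : ℕ => qgr β n / β ^ n) Filter.atTop (nhds 0) := by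
    apply squeeze_zero (fun n => by
      have := (qgr_pos_le β hβ n).1
      positivity) (g := fun n => (1/β)^n)
    · intro n
      rw [one_div, inv_pow, ← one_div]
      gcongr
      exact (qgr_pos_le β hβ n).2
    · exact tendsto_pow_atTop_nhds_zero_of_lt_one (by positivity) (by
        rw [div_lt_one hβ0]; linarith)
  have : Filter.Tendsto (fun n : ℕ => 1 - qgr β n / β ^ n) Filter.atTop (nhds (1 - 0)) :=
    Filter.Tendsto.sub tendsto_const_nhds key
  simp only [sub_zero] at this
  exact this.congr (fun n => (qg_partial β hβ n).symm)

lemma qg_nonzero (β : ℝ) (hβ : 1 < β) : ∀ N, ∃ i ≥ N, qgd β i ≠ 0 := by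
  intro N
  by_contra h
  push_neg at h
  have hgrow : ∀ j, qgr β (N + j) = β ^ j * qgr β N := by
    intro j
    induction j with
    | zero => simp
    | succ j ih =>
      have h0 : qgd β (N + j) = 0 := h _ (by omega)
      have := qgr_succ β hβ (N + j)
      rw [h0] at this
      rw [show N + (j+1) = (N+j)+1 by ring, this, ih]
      push_cast
      ring
  obtain ⟨n, hn⟩ := pow_unbounded_of_one_lt (1 / qgr β N) hβ
  have h1 := (qgr_pos_le β hβ N).1
  have h2 := (qgr_pos_le β hβ (N + n)).2
  rw [hgrow n] at h2
  rw [div_lt_iff₀ h1] at hn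
  nlinarith

/-- The Rényi expansion of 1 has first digit at least 1. -/
lemma renyi_d0 (β : ℝ) (hβ : 1 < β) (d : ℕ → ℕ) (hd : IsRenyiExpansionOfOne β d) :
    1 ≤ d 0 := by
  have hvalid := hd.2.2.2 (qgd β) (qgd_le β hβ) (qg_hasSum β hβ) (qg_nonzero β hβ)
  have h0 : 1 ≤ qgd β 0 := by
    have h2 : 1 < ⌈β⌉₊ := by
      rw [Nat.lt_ceil]
      exact_mod_cast hβ
    have : qgd β 0 = ⌈β⌉₊ - 1 := by
      unfold qgd
      norm_num [qgr]
    omega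
  rcases hvalid with heq | ⟨p, hagree, hlt⟩
  · rw [← heq]; exact h0
  · rcases Nat.eq_zero_or_pos p with rfl | hp
    · omega
    · rw [← hagree 0 hp]; exact h0

/-- if d*_β(1) = u v^ω is ultimately periodic (preperiod `up`, period
`vp ≥ 1`) and k = up + vp, then every binary word of the form 0^{n₁}10^{n₂}10^{n₃}⋯
with all nᵢ ≥ k has all of its shifts lexicographically smaller than d*_β(1),
i.e. it is the β-expansion of some real in [0,1). -/
theorem stmt1 (β : ℝ) (hβ : 1 < β) (d : ℕ → ℕ) (hd : IsRenyiExpansionOfOne β d)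
    (up vp : ℕ) (hvp : 1 ≤ vp) (hper : ∀ i, up ≤ i → d (i + vp) = d i)
    (k : ℕ) (hk : k = up + vp)
    (w : ℕ → ℕ) (hw01 : ∀ i, w i ≤ 1)
    (hfirst : ∀ i, w i = 1 → k ≤ i)
    (hgap : ∀ i j, w i = 1 → w j = 1 → i < j → i + k < j)
    (hinf : ∀ N, ∃ i ≥ N, w i = 1) :
    ∀ m, LexLT (fun i => w (m + i)) d := by
  have hd0 : 1 ≤ d 0 := renyi_d0 β hβ d hd
  -- periodicity iterated
  have hper' : ∀ s i, up ≤ i → d (i + vp * s) = d i := by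
    intro s
    induction s with
    | zero => simp
    | succ s ih =>
      intro i hi
      have he : i + vp * (s + 1) = (i + vp * s) + vp := by ring
      rw [he, hper _ (by omega), ih i hi]
  -- a nonzero digit in the period
  obtain ⟨j, hjup, hjne⟩ := hd.2.2.1 up
  have hq : d (up + (j - up) % vp) ≠ 0 := by
    have hj : up + (j - up) % vp + vp * ((j - up) / vp) = j := by
      have := Nat.mod_add_div (j - up) vp
      omega
    rw [← hper' ((j - up) / vp) _ (by omega), hj]
    exact hjne
  set q := up + (j - up) % vp with hqdef
  have hqk : q < k := by
    have := Nat.mod_lt (j - up) (show 0 < vp by omega)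
    omega
  -- window property: every k consecutive positions contain a nonzero digit of d
  have hwin : ∀ t, ∃ p, t ≤ p ∧ p < t + k ∧ d p ≠ 0 := by
    intro t
    induction t with
    | zero => exact ⟨q, Nat.zero_le _, by omega, hq⟩
    | succ t ih =>
      obtain ⟨p, hp1, hp2, hp3⟩ := ih
      rcases Nat.lt_or_ge t p with h | h
      · exact ⟨p, h, by omega, hp3⟩
      · have hpt : p = t := by omega
        rcases Nat.lt_or_ge p up with h2 | h2
        · exact ⟨q, by omega, by omega, hq⟩
        · exact ⟨p + vp, by omega, by omega, by rw [hper p h2]; exact hp3⟩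
  intro m
  by_cases hall : ∀ i, w (m + i) = d i
  · exfalso
    obtain ⟨p1, _, hp1k, hdp1⟩ := hwin 0
    obtain ⟨p2, hp2ge, hp2lt, hdp2⟩ := hwin (p1 + 1)
    have h1 : w (m + p1) = 1 := by
      have h1 := hall p1; have := hw01 (m + p1); omega
    have h2 : w (m + p2) = 1 := by
      have h1 := hall p2; have := hw01 (m + p2); omega
    have := hgap (m + p1) (m + p2) h1 h2 (by omega)
    omega
  · push_neg at hall
    set p := Nat.find hall with hpdef
    have hp : w (m + p) ≠ d p := Nat.find_spec hall
    have hagree : ∀ i < p, w (m + i) = d i := by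
      intro i hi
      have := Nat.find_min hall hi
      simpa using this
    refine ⟨p, hagree, ?_⟩
    show w (m + p) < d p
    by_contra hlt
    have hw1 : w (m + p) = 1 := by have := hw01 (m + p); omega
    have hdp : d p = 0 := by have := hw01 (m + p); omega
    by_cases hj : ∃ j0, w (m + j0) = 1 ∧ j0 < p
    · obtain ⟨j0, hj01, hj0p⟩ := hj
      set jm := Nat.findGreatest (fun j => w (m + j) = 1 ∧ j < p) p with hjm
      have hQ : w (m + jm) = 1 ∧ jm < p :=
        Nat.findGreatest_spec (P := fun j => w (m + j) = 1 ∧ j < p) (m := j0) (le_of_lt hj0p) ⟨hj01, hj0p⟩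
      have hgapj : jm + k < p := by
        have := hgap (m + jm) (m + p) hQ.1 hw1 (by omega)
        omega
      obtain ⟨p', hp'ge, hp'lt, hdp'⟩ := hwin (p - k)
      have hp'ltp : p' < p := by omega
      have heq := hagree p' hp'ltp
      have hwp' : w (m + p') = 1 := by have := hw01 (m + p'); omega
      have hjlt : jm < p' := by omega
      exact Nat.findGreatest_is_greatest hjlt (by omega) ⟨hwp', hp'ltp⟩
    · push_neg at hj
      have hd00 : d 0 = 0 := by
        rcases Nat.eq_zero_or_pos p with h | h
        · exact h ▸ hdp
        · have h0 := hagree 0 h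
          have h1 : w (m + 0) ≠ 1 := fun hx => absurd h (by simpa using hj 0 hx)
          have h2 := hw01 (m + 0)
          omega
      omega
end

section
/- Let β > 1 be a Pisot number and let c ≥ 1 be an integer. Then the set C[β] ∩ [-c/(β-1), c/(β-1)] is finite, where C[β] = { Σ_{i=0}^n a_i β^i : n ≥ 0, a_i ∈ {-c,...,c} } is the set of values of polynomials in β with integer coefficients of absolute value at most c. -/
/-- A Pisot number. -/
def IsPisot (β : ℝ) : Prop :=
  1 < β ∧ IsIntegral ℤ β ∧
    ∀ z : ℂ, Polynomial.aeval z (minpoly ℤ β) = 0 → z ≠ (β : ℂ) → ‖z‖ < 1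

/-- Berend–Frougny: for β Pisot and c ≥ 1, the set of values of
polynomials in β with integer coefficients of absolute value ≤ c that lie in
[-c/(β-1), c/(β-1)] is finite. -/
theorem stmt3 (β : ℝ) (hβ : IsPisot β) (c : ℤ) (hc : 1 ≤ c) :
    Set.Finite
      ({x : ℝ | ∃ (m : ℕ) (a : ℕ → ℤ), (∀ i, |a i| ≤ c) ∧
          x = ∑ i ∈ Finset.range m, (a i : ℝ) * β ^ i} ∩
        Set.Icc (-((c : ℝ) / (β - 1))) ((c : ℝ) / (β - 1))) := by
  obtain ⟨hβ1, hint, hconj⟩ := hβ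
  have hβQ : IsIntegral ℚ β := hint.tower_top
  let K : IntermediateField ℚ ℝ := IntermediateField.adjoin ℚ {β}
  haveI : FiniteDimensional ℚ K := IntermediateField.adjoin.finiteDimensional hβQ
  haveI : NumberField K := ⟨⟩
  let β' : K := ⟨β, IntermediateField.mem_adjoin_simple_self ℚ β⟩
  have hβ'map : algebraMap K ℝ β' = β := rfl
  have hinj : Function.Injective (algebraMap K ℝ) := (algebraMap K ℝ).injective
  have hβ'int : IsIntegral ℤ β' := by
    rwa [← isIntegral_algebraMap_iff hinj, hβ'map]
  haveI : Nonempty (K →+* ℂ) := ⟨Complex.ofRealHom.comp (algebraMap K ℝ)⟩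
  -- every embedding sends β' to a root of minpoly ℤ β
  have hroot : ∀ φ : K →+* ℂ, Polynomial.aeval (φ β') (minpoly ℤ β) = 0 := by
    intro φ
    have h1 : minpoly ℤ β' = minpoly ℤ β := by
      rw [← hβ'map]; exact (minpoly.algebraMap_eq (A := ℤ) hinj β').symm
    rw [← h1]
    have : Polynomial.aeval (φ β') (minpoly ℤ β') =
        φ (Polynomial.aeval β' (minpoly ℤ β')) := by
      rw [Polynomial.aeval_def, Polynomial.aeval_def, Polynomial.hom_eval₂]
      congr 1
      ext n
      simp
    rw [this, minpoly.aeval, map_zero]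
  -- uniform bound
  let B : ℝ := max ((c : ℝ) / (β - 1))
      (Finset.univ.sup' Finset.univ_nonempty fun φ : K →+* ℂ => (c : ℝ) / (1 - ‖φ β'‖))
  have hT := NumberField.Embeddings.finite_of_norm_le K ℂ B
  refine ((hT.image (algebraMap K ℝ)).subset ?_)
  rintro x ⟨⟨m, a, ha, hx⟩, hIcc⟩
  refine ⟨∑ i ∈ Finset.range m, (a i : K) * β' ^ i, ⟨?_, ?_⟩, ?_⟩
  · -- integrality
    have : (∑ i ∈ Finset.range m, (a i : K) * β' ^ i) ∈ integralClosure ℤ K := by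
      refine Subalgebra.sum_mem _ fun i _ => Subalgebra.mul_mem _ ?_ (Subalgebra.pow_mem _ hβ'int i)
      have : ((a i : K)) = algebraMap ℤ K (a i) := by simp
      rw [this]
      exact Subalgebra.algebraMap_mem _ _
    exact this
  · -- bounds at every embedding
    intro φ
    have hφ : φ (∑ i ∈ Finset.range m, (a i : K) * β' ^ i) =
        ∑ i ∈ Finset.range m, (a i : ℂ) * (φ β') ^ i := by
      rw [map_sum]; congr 1; ext i; rw [map_mul, map_pow, map_intCast]
    rw [hφ]
    by_cases hz : φ β' = (β : ℂ)
    · -- this embedding is the real one (on β'); value is x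
      have : ∑ i ∈ Finset.range m, (a i : ℂ) * (φ β') ^ i = ((x : ℝ) : ℂ) := by
        rw [hz, hx]; push_cast; ring_nf
      rw [this]
      have hxabs : |x| ≤ (c : ℝ) / (β - 1) := abs_le.mpr ⟨hIcc.1, hIcc.2⟩
      calc ‖((x : ℝ) : ℂ)‖ = |x| := by rw [Complex.norm_real, Real.norm_eq_abs]
        _ ≤ (c : ℝ) / (β - 1) := hxabs
        _ ≤ B := le_max_left _ _
    · -- |φ β'| < 1
      have hr : ‖φ β'‖ < 1 := hconj _ (hroot φ) hz
      set r : ℝ := ‖φ β'‖ with hrdef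
      have hr0 : 0 ≤ r := norm_nonneg _
      have hr1 : r < 1 := hr
      have hsum : ∑ i ∈ Finset.range m, r ^ i ≤ (1 - r)⁻¹ := by
        have h := Summable.sum_le_tsum (Finset.range m) (fun i _ => pow_nonneg hr0 i)
          (summable_geometric_of_lt_one hr0 hr1)
        rwa [tsum_geometric_of_lt_one hr0 hr1] at h
      calc ‖∑ i ∈ Finset.range m, (a i : ℂ) * (φ β') ^ i‖
          ≤ ∑ i ∈ Finset.range m, ‖(a i : ℂ) * (φ β') ^ i‖ := norm_sum_le _ _
        _ ≤ ∑ i ∈ Finset.range m, (c : ℝ) * r ^ i := by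
            refine Finset.sum_le_sum fun i _ => ?_
            rw [norm_mul, norm_pow]
            have h1 : ‖(a i : ℂ)‖ = |(a i : ℝ)| := by
              rw [← Complex.ofReal_intCast, Complex.norm_real, Real.norm_eq_abs]
            rw [h1]
            have : |(a i : ℝ)| ≤ (c : ℝ) := by exact_mod_cast ha i
            exact mul_le_mul_of_nonneg_right this (pow_nonneg hr0 i)
        _ = (c : ℝ) * ∑ i ∈ Finset.range m, r ^ i := by rw [Finset.mul_sum]
        _ ≤ (c : ℝ) * (1 - r)⁻¹ := by
            refine mul_le_mul_of_nonneg_left hsum ?_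
            exact_mod_cast (le_trans zero_le_one (by exact_mod_cast hc))
        _ = (c : ℝ) / (1 - r) := by rw [div_eq_mul_inv]
        _ ≤ B := le_trans (Finset.le_sup' (fun φ : K →+* ℂ => (c : ℝ) / (1 - ‖φ β'‖))
              (Finset.mem_univ φ)) (le_max_right _ _)
  · -- the image is x
    rw [map_sum, hx]
    refine Finset.sum_congr rfl fun i _ => ?_
    rw [map_mul, map_pow, map_intCast, hβ'map]
end

section
/- Let β > 1 be a real number, c ≥ 1 an integer, and suppose the set C[β] ∩ [-c/(β-1), c/(β-1)] is finite for every integer c ≥ 1, where C[β] is the set of polynomial values in β with coefficients in {-c,...,c}. Then β is an algebraic number. -/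
open Polynomial Finset

/-- if for every c ≥ 1 the set C[β] ∩ [-c/(β-1), c/(β-1)] is finite,
then β is algebraic. -/
theorem stmt4 (β : ℝ) (hβ : 1 < β)
    (hfin : ∀ c : ℤ, 1 ≤ c →
      Set.Finite
        ({x : ℝ | ∃ (m : ℕ) (a : ℕ → ℤ), (∀ i, |a i| ≤ c) ∧
            x = ∑ i ∈ Finset.range m, (a i : ℝ) * β ^ i} ∩
          Set.Icc (-((c : ℝ) / (β - 1))) ((c : ℝ) / (β - 1)))) :
    IsAlgebraic ℚ β := by
  by_contra hT
  have htr : ∀ p : ℚ[X], Polynomial.aeval β p = 0 → p = 0 :=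
    transcendental_iff.mp hT
  set c : ℤ := ⌊β⌋ + 1 with hcdef
  have hfl1 : (1:ℤ) ≤ ⌊β⌋ := Int.le_floor.mpr (by exact_mod_cast hβ.le)
  have hc1 : (1:ℤ) ≤ c := by omega
  have hβ0 : (0:ℝ) < β - 1 := by linarith
  have hcβ : (β:ℝ) ≤ (c:ℝ) := by
    have := Int.lt_floor_add_one β
    push_cast [hcdef]
    linarith
  -- the orbit of 1 under x ↦ fract (β x)
  let r : ℕ → ℝ := fun j => Nat.rec (1:ℝ) (fun _ x => Int.fract (β * x)) j
  let d : ℕ → ℤ := fun j => ⌊β * r j⌋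
  have hr0 : r 0 = 1 := rfl
  have hrs : ∀ j, r (j+1) = β * r j - (d j : ℝ) := fun j => rfl
  have hr01 : ∀ j, 0 ≤ r j ∧ r j ≤ 1 := by
    intro j
    cases j with
    | zero => exact ⟨zero_le_one, le_refl 1⟩
    | succ n => exact ⟨Int.fract_nonneg _, (Int.fract_lt_one _).le⟩
  have hd : ∀ j, 0 ≤ d j ∧ d j ≤ c := by
    intro j
    constructor
    · exact Int.le_floor.mpr (by simpa using mul_nonneg (by linarith) (hr01 j).1)
    · have h1 : β * r j ≤ β := by
        have := (hr01 j).2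
        nlinarith [(hr01 j).1]
      have : (d j : ℝ) ≤ β := le_trans (Int.floor_le _) h1
      have : (d j : ℝ) ≤ (c:ℝ) := le_trans this hcβ
      exact_mod_cast this
  -- fundamental identity
  have hid : ∀ j, β ^ j = (∑ k ∈ Finset.range j, (d k : ℝ) * β ^ (j - 1 - k)) + r j := by
    intro j
    induction j with
    | zero => simp [hr0]
    | succ n ih =>
      have h1 : ∑ k ∈ Finset.range (n+1), (d k : ℝ) * β ^ (n + 1 - 1 - k)
          = (∑ k ∈ Finset.range n, (d k : ℝ) * β ^ (n - 1 - k)) * β + (d n : ℝ) := by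
        rw [Finset.sum_range_succ, Finset.sum_mul]
        congr 1
        · refine Finset.sum_congr rfl fun k hk => ?_
          have hk' := Finset.mem_range.mp hk
          rw [mul_assoc, ← pow_succ]
          congr 2
          omega
        · have hnn : n + 1 - 1 - n = 0 := by omega
          rw [hnn, pow_zero, mul_one]
      rw [h1, hrs n, pow_succ, ih]
      ring
  -- membership in the finite set
  have hmem : ∀ j, r j ∈
      ({x : ℝ | ∃ (m : ℕ) (a : ℕ → ℤ), (∀ i, |a i| ≤ c) ∧
          x = ∑ i ∈ Finset.range m, (a i : ℝ) * β ^ i} ∩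
        Set.Icc (-((c : ℝ) / (β - 1))) ((c : ℝ) / (β - 1))) := by
    intro j
    constructor
    · refine ⟨j + 1, fun i => if i = j then 1 else if i < j then -(d (j-1-i)) else 0, ?_, ?_⟩
      · intro i
        by_cases h1 : i = j
        · simp [h1]; omega
        · by_cases h2 : i < j
          · simp only [h1, if_false, h2, if_true]
            have := hd (j-1-i)
            rw [abs_neg, abs_of_nonneg this.1]
            exact this.2
          · simp [h1, h2]; omega
      · rw [Finset.sum_range_succ]
        beta_reduce
        rw [if_pos rfl]
        have hlow : ∀ i ∈ Finset.range j,
            ((if i = j then (1:ℤ) else if i < j then -(d (j-1-i)) else 0 : ℤ) : ℝ) * β ^ i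
              = -((d (j-1-i) : ℝ) * β ^ i) := by
          intro i hi
          have hi' := Finset.mem_range.mp hi
          rw [if_neg (by omega), if_pos hi']
          push_cast
          ring
        rw [Finset.sum_congr rfl hlow]
        have hrefl : ∑ i ∈ Finset.range j, (d (j-1-i) : ℝ) * β ^ i
            = ∑ k ∈ Finset.range j, (d k : ℝ) * β ^ (j - 1 - k) := by
          rw [← Finset.sum_range_reflect (fun k => (d k : ℝ) * β ^ (j - 1 - k)) j]
          refine Finset.sum_congr rfl fun i hi => ?_
          have hi' := Finset.mem_range.mp hi
          have he : j - 1 - (j - 1 - i) = i := by omega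
          rw [he]
        rw [Finset.sum_neg_distrib, hrefl]
        have := hid j
        push_cast
        linarith
    · have h1 : (1:ℝ) ≤ (c:ℝ) / (β - 1) := (one_le_div hβ0).mpr (by linarith)
      have h2 := hr01 j
      constructor
      · have : (0:ℝ) ≤ (c:ℝ) / (β - 1) := by linarith
        linarith [h2.1]
      · linarith [h2.2]
  -- pigeonhole
  have hSfin := hfin c hc1
  have hnotinj : ¬ Function.Injective r := fun hinj =>
    (Set.infinite_range_of_injective hinj) (hSfin.subset (Set.range_subset_iff.mpr hmem))
  obtain ⟨a, b, hab, hne⟩ := Function.not_injective_iff.mp hnotinj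
  have key : ∀ m n : ℕ, m < n → r m = r n → False := by
    intro m n hlt heq
    set p : ℚ[X] := X^n - X^m - (∑ k ∈ Finset.range n, C ((d k : ℚ)) * X^(n-1-k))
        + ∑ k ∈ Finset.range m, C ((d k : ℚ)) * X^(m-1-k) with hpdef
    have hev : Polynomial.aeval β p = 0 := by
      have h1 := hid n
      have h2 := hid m
      simp only [hpdef, map_add, map_sub, map_sum, map_mul, map_pow, aeval_X, aeval_C]
      have hcast : ∀ k : ℕ, (algebraMap ℚ ℝ) ((d k : ℚ)) = (d k : ℝ) := by
        intro k; norm_num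
      simp only [hcast]
      linarith [h1, h2, heq]
    have hp0 := htr p hev
    have hcoeff : p.coeff n = 1 := by
      have hn1 : 1 ≤ n := by omega
      have hs1 : ∑ x ∈ Finset.range n, (d x : ℚ) * (if n = n - 1 - x then 1 else 0) = 0 :=
        Finset.sum_eq_zero fun k hk => by
          have := Finset.mem_range.mp hk
          rw [if_neg (by omega : ¬ n = n - 1 - k), mul_zero]
      have hs2 : ∑ x ∈ Finset.range m, (d x : ℚ) * (if n = m - 1 - x then 1 else 0) = 0 :=
        Finset.sum_eq_zero fun k hk => by
          have := Finset.mem_range.mp hk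
          rw [if_neg (by omega : ¬ n = m - 1 - k), mul_zero]
      simp only [hpdef, coeff_add, coeff_sub, coeff_X_pow, finset_sum_coeff, coeff_C_mul,
        hs1, hs2]
      rw [if_neg (by omega : ¬ n = m)]
      norm_num
    rw [hp0] at hcoeff
    simp at hcoeff
  rcases hne.lt_or_gt with h | h
  · exact key a b h hab
  · exact key b a h hab.symm
end

section
/- Let (V, E) be a finite directed graph in which every vertex has at least one outgoing edge, and for each edge e from u to v let S_e : ℝ^n → ℝ^n be a contracting similarity with ratio r_e < 1. Then there exists a unique family (K_v)_{v ∈ V} of nonempty compact subsets of ℝ^n such that for every vertex u, K_u = ⋃_{v ∈ V} ⋃_{e ∈ E_{uv}} S_e(K_v). -/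
open EMetric Metric TopologicalSpace Set
open scoped NNReal ENNReal

/-- existence and uniqueness of the attractor of a graph-directed
iterated function system in ℝⁿ: a finite directed graph in which every vertex has
an outgoing edge, each edge carrying a contracting similarity. -/
theorem stmt5 (n : ℕ) (V E : Type) [Fintype V] [Fintype E]
    (src tgt : E → V) (hout : ∀ v, ∃ e, src e = v)
    (S : E → EuclideanSpace ℝ (Fin n) → EuclideanSpace ℝ (Fin n))
    (r : E → ℝ) (hr : ∀ e, r e < 1)
    (hS : ∀ e x y, dist (S e x) (S e y) = r e * dist x y) :
    ∃! K : V → Set (EuclideanSpace ℝ (Fin n)),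
      (∀ v, (K v).Nonempty ∧ IsCompact (K v)) ∧
      ∀ u, K u = ⋃ e ∈ {e : E | src e = u}, S e '' K (tgt e) := by
  classical
  -- contraction constant
  set c : ℝ≥0 := Finset.univ.sup fun e => Real.toNNReal (r e) with hc
  have hc1 : c < 1 := by
    rw [hc, Finset.sup_lt_iff (by norm_num : (⊥ : ℝ≥0) < 1)]
    intro e _
    rw [show (1 : ℝ≥0) = Real.toNNReal 1 by simp,
      Real.toNNReal_lt_toNNReal_iff (by norm_num)]
    exact hr e
  have hrc : ∀ e, r e ≤ (c : ℝ) := fun e =>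
    (Real.le_coe_toNNReal (r e)).trans
      (by exact_mod_cast Finset.le_sup (f := fun e => Real.toNNReal (r e)) (Finset.mem_univ e))
  have lip : ∀ e, LipschitzWith c (S e) := fun e =>
    LipschitzWith.of_dist_le_mul fun x y => by
      rw [hS e x y]
      exact mul_le_mul_of_nonneg_right (hrc e) dist_nonneg
  -- the map on tuples of nonempty compact sets
  have cptF : ∀ (K : V → NonemptyCompacts (EuclideanSpace ℝ (Fin n))) (u : V),
      IsCompact (⋃ e ∈ {e : E | src e = u}, S e '' (K (tgt e) : Set (EuclideanSpace ℝ (Fin n)))) :=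
    fun K u =>
    (Set.toFinite _).isCompact_biUnion fun e _ =>
      ((K (tgt e)).isCompact.image (lip e).continuous)
  have neF : ∀ (K : V → NonemptyCompacts (EuclideanSpace ℝ (Fin n))) (u : V),
      (⋃ e ∈ {e : E | src e = u},
        S e '' (K (tgt e) : Set (EuclideanSpace ℝ (Fin n)))).Nonempty := by
    intro K u
    obtain ⟨e, he⟩ := hout u
    obtain ⟨x, hx⟩ := (K (tgt e)).nonempty
    exact ⟨S e x, Set.mem_biUnion he ⟨x, hx, rfl⟩⟩
  set F : (V → NonemptyCompacts (EuclideanSpace ℝ (Fin n))) →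
      (V → NonemptyCompacts (EuclideanSpace ℝ (Fin n))) := fun K u =>
    ⟨⟨⋃ e ∈ {e : E | src e = u}, S e '' (K (tgt e) : Set (EuclideanSpace ℝ (Fin n))),
      cptF K u⟩, neF K u⟩ with hF
  -- one-sided Hausdorff estimate
  have side : ∀ (K L : V → NonemptyCompacts (EuclideanSpace ℝ (Fin n))) (u : V),
      ∀ x ∈ (F K u : Set (EuclideanSpace ℝ (Fin n))),
        ∃ y ∈ (F L u : Set (EuclideanSpace ℝ (Fin n))), edist x y ≤ c * edist K L := by
    intro K L u x hx
    have hx' : x ∈ ⋃ e ∈ {e : E | src e = u},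
        S e '' (K (tgt e) : Set (EuclideanSpace ℝ (Fin n))) := hx
    rw [Set.mem_iUnion₂] at hx'
    obtain ⟨e, he, a, ha, rfl⟩ := hx'
    obtain ⟨b, hb, hab⟩ := (L (tgt e)).isCompact.exists_infEdist_eq_edist
      (L (tgt e)).nonempty a
    refine ⟨S e b, Set.mem_biUnion he ⟨b, hb, rfl⟩, ?_⟩
    calc edist (S e a) (S e b) ≤ c * edist a b := (lip e) a b
      _ = c * infEDist a (L (tgt e)) := by rw [hab]
      _ ≤ c * hausdorffEdist (K (tgt e) : Set (EuclideanSpace ℝ (Fin n))) (L (tgt e)) :=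
          mul_le_mul_right (infEdist_le_hausdorffEdist_of_mem ha) _
      _ = c * edist (K (tgt e)) (L (tgt e)) := rfl
      _ ≤ c * edist K L := mul_le_mul_right (edist_le_pi_edist K L (tgt e)) _
  have hFlip : LipschitzWith c F := by
    intro K L
    rw [edist_pi_le_iff]
    intro u
    have h1 : edist (F K u) (F L u)
        = hausdorffEdist ((F K u : Set (EuclideanSpace ℝ (Fin n))))
            ((F L u : Set (EuclideanSpace ℝ (Fin n)))) := rfl
    rw [h1]
    refine hausdorffEdist_le_of_mem_edist (side K L u) ?_
    intro x hx
    obtain ⟨y, hy, hxy⟩ := side L K u x hx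
    exact ⟨y, hy, by rwa [edist_comm L K] at hxy⟩
  have hcontr : ContractingWith c F := ⟨hc1, hFlip⟩
  set Kfix := hcontr.fixedPoint F with hKfix
  have hfix : F Kfix = Kfix := hcontr.fixedPoint_isFixedPt
  refine ⟨fun v => (Kfix v : Set (EuclideanSpace ℝ (Fin n))),
    ⟨fun v => ⟨(Kfix v).nonempty, (Kfix v).isCompact⟩, ?_⟩, ?_⟩
  · intro u
    conv_lhs => rw [← hfix]
    rfl
  · rintro K' ⟨hK'1, hK'2⟩
    set K'' : V → NonemptyCompacts (EuclideanSpace ℝ (Fin n)) := fun v =>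
      ⟨⟨K' v, (hK'1 v).2⟩, (hK'1 v).1⟩ with hK''
    have hfix' : F K'' = K'' := by
      funext u
      apply TopologicalSpace.NonemptyCompacts.ext
      exact (hK'2 u).symm
    have heq : K'' = Kfix := hcontr.fixedPoint_unique hfix'
    funext v
    rw [← heq]
    rfl
end

section
/- Let β be a Pisot number, c ≥ 1 an integer, C = {-c,...,c}^n, and let X ⊆ ℝ^n be a finite union of components of the attractor of a graph-directed IFS all of whose similarities are of the form S_a(x) = (x+a)/β with a ∈ C. Then X is (β,C)-self-similar: the collection of sets N_{k,b}(X) = (β^k X − b) ∩ [-c/(β-1), c/(β-1)]^n, for k ∈ ℤ_{≥0} and b with coordinates in C^{<k}[β], is finite. -/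
/-- The cube [-c/(β-1), c/(β-1)]ⁿ. -/
noncomputable def cube (n : ℕ) (c β : ℝ) : Set (Fin n → ℝ) :=
  Set.Icc (fun _ => -(c / (β - 1))) (fun _ => c / (β - 1))

/-- The similarity S_a(x) = (x + a)/β on ℝⁿ. -/
noncomputable def Sa (n : ℕ) (β : ℝ) (a : Fin n → ℤ) : (Fin n → ℝ) → (Fin n → ℝ) :=
  fun x j => (x j + a j) / β

/-- Values of polynomials of degree < k in β with integer coefficients bounded by c. -/
def PolyVal (β : ℝ) (c : ℤ) (k : ℕ) : Set ℝ :=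
  {b | ∃ a : ℕ → ℤ, (∀ i, |a i| ≤ c) ∧ b = ∑ i ∈ Finset.range k, (a i : ℝ) * β ^ i}

/-- The (β,C)-kernel of X. -/
noncomputable def Kernel (n : ℕ) (β : ℝ) (c : ℤ) (X : Set (Fin n → ℝ)) :
    Set (Set (Fin n → ℝ)) :=
  {Y | ∃ (k : ℕ) (b : Fin n → ℝ), (∀ j, b j ∈ PolyVal β c k) ∧
    Y = ((fun x : Fin n → ℝ => fun j => β ^ k * x j - b j) '' X) ∩ cube n (c : ℝ) β}

open IntermediateField Polynomial in
lemma polyval_bounded_finite (β : ℝ) (hβ : IsPisot β) (d : ℤ) (M : ℝ) :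
    {t : ℝ | (∃ k, t ∈ PolyVal β d k) ∧ |t| ≤ M}.Finite := by
  obtain ⟨hβ1, hint, hconj⟩ := hβ
  have hβQ : IsIntegral ℚ β := hint.tower_top
  letI Kf : IntermediateField ℚ ℝ := ℚ⟮β⟯
  haveI : FiniteDimensional ℚ Kf := adjoin.finiteDimensional hβQ
  haveI : NumberField Kf := ⟨⟩
  set g : Kf := AdjoinSimple.gen ℚ β with hg
  have hgβ : algebraMap Kf ℝ g = β := rfl
  have hinj : Function.Injective (algebraMap Kf ℝ) := (algebraMap Kf ℝ).injective
  have hgint : IsIntegral ℤ g := by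
    rwa [← isIntegral_algebraMap_iff hinj, hgβ]
  have hmp : minpoly ℚ g = (minpoly ℤ β).map (algebraMap ℤ ℚ) := by
    have h2 := minpoly.algebraMap_eq (A := ℚ) hinj g
    rw [hgβ] at h2
    rw [← h2, minpoly.isIntegrallyClosed_eq_field_fractions' ℚ hint]
  -- each embedding sends g to a conjugate
  have hroot : ∀ φ : Kf →+* ℂ, aeval (φ g) (minpoly ℤ β) = 0 := by
    intro φ
    have h1 : aeval (φ g) (minpoly ℚ g) = 0 := by
      rw [show φ g = (RingHom.equivRatAlgHom (R := Kf) (S := ℂ) φ) g from rfl,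
        Polynomial.aeval_algHom_apply, minpoly.aeval, map_zero]
    rwa [hmp, Polynomial.aeval_map_algebraMap] at h1
  have hcase : ∀ φ : Kf →+* ℂ, φ g = (β : ℂ) ∨ ‖φ g‖ < 1 := by
    intro φ
    by_cases h : φ g = (β : ℂ)
    · exact Or.inl h
    · exact Or.inr (by simpa using hconj _ (hroot φ) h)
  set B : ℝ := max M 0 + ∑ φ : (Kf →+* ℂ), max ((d : ℝ) / (1 - ‖φ g‖)) 0 with hB
  have hsumnn : (0:ℝ) ≤ ∑ φ : (Kf →+* ℂ), max ((d : ℝ) / (1 - ‖φ g‖)) 0 :=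
    Finset.sum_nonneg fun _ _ => le_max_right _ _
  have hS := NumberField.Embeddings.finite_of_norm_le Kf ℂ B
  refine Set.Finite.subset (hS.image (algebraMap Kf ℝ)) ?_
  rintro t ⟨⟨k, a, ha, hta⟩, htM⟩
  set γ : Kf := ∑ i ∈ Finset.range k, (a i : Kf) * g ^ i with hγ
  have hmapγ : algebraMap Kf ℝ γ = t := by
    rw [hγ, map_sum, hta]
    refine Finset.sum_congr rfl fun i _ => ?_
    rw [map_mul, map_pow, hgβ, map_intCast]
  refine ⟨γ, ⟨?_, ?_⟩, hmapγ⟩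
  · -- integral
    have : γ ∈ integralClosure ℤ Kf := by
      refine Subalgebra.sum_mem _ fun i _ => Subalgebra.mul_mem _ ?_ (Subalgebra.pow_mem _ hgint _)
      exact (integralClosure ℤ Kf).intCast_mem _
    exact this
  · intro φ
    have hφγ : φ γ = ∑ i ∈ Finset.range k, (a i : ℂ) * (φ g) ^ i := by
      rw [hγ, map_sum]
      exact Finset.sum_congr rfl fun i _ => by rw [map_mul, map_pow, map_intCast]
    rcases hcase φ with h | h
    · have : φ γ = (t : ℂ) := by
        rw [hφγ, h, hta]
        push_cast
        ring
      rw [this]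
      calc ‖(t:ℂ)‖ = |t| := by simp [Complex.norm_real]
      _ ≤ max M 0 := le_trans htM (le_max_left _ _)
      _ ≤ B := le_add_of_nonneg_right hsumnn
    · set r := ‖φ g‖ with hr
      have hr0 : 0 ≤ r := norm_nonneg _
      have hd0 : (0:ℝ) ≤ (d:ℝ) := by
        have := (abs_nonneg (a 0)).trans (ha 0); exact_mod_cast this
      have h1r : (0:ℝ) < 1 - r := by linarith
      have hgeom : ∑ i ∈ Finset.range k, r ^ i ≤ 1 / (1 - r) := by
        rw [geom_sum_eq (ne_of_lt h)]
        have heq : (r ^ k - 1) / (r - 1) = (1 - r ^ k) / (1 - r) := by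
          rw [← neg_div_neg_eq]; ring_nf
        rw [heq, div_le_div_iff₀ h1r h1r]
        nlinarith [pow_nonneg hr0 k]
      have hbound : ‖φ γ‖ ≤ (d:ℝ) / (1 - r) := by
        rw [hφγ]
        calc ‖∑ i ∈ Finset.range k, (a i : ℂ) * (φ g) ^ i‖
            ≤ ∑ i ∈ Finset.range k, ‖(a i : ℂ) * (φ g) ^ i‖ := norm_sum_le _ _
          _ ≤ ∑ i ∈ Finset.range k, (d:ℝ) * r ^ i := by
              refine Finset.sum_le_sum fun i _ => ?_
              rw [norm_mul, norm_pow]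
              have h1 : ‖((a i : ℤ) : ℂ)‖ ≤ (d:ℝ) := by
                rw [Complex.norm_intCast]
                exact_mod_cast ha i
              exact mul_le_mul_of_nonneg_right h1 (pow_nonneg hr0 _)
          _ = (d:ℝ) * ∑ i ∈ Finset.range k, r ^ i := by rw [Finset.mul_sum]
          _ ≤ (d:ℝ) * (1 / (1 - r)) := mul_le_mul_of_nonneg_left hgeom hd0
          _ = (d:ℝ) / (1 - r) := by ring
      calc ‖φ γ‖ ≤ (d:ℝ) / (1 - r) := hbound
        _ ≤ max ((d:ℝ) / (1 - ‖φ g‖)) 0 := le_max_left _ _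
        _ ≤ ∑ ψ : (Kf →+* ℂ), max ((d:ℝ) / (1 - ‖ψ g‖)) 0 :=
            Finset.single_le_sum (f := fun ψ : Kf →+* ℂ => max ((d:ℝ) / (1 - ‖ψ g‖)) 0)
              (fun ψ _ => le_max_right _ _) (Finset.mem_univ φ)
        _ ≤ B := le_add_of_nonneg_left (le_max_right _ _)

/-- for β Pisot, a finite union X of components of the attractor of
a GDIFS whose similarities are S_a(x) = (x+a)/β with a ∈ Cⁿ is (β,C)-self-similar:
its (β,C)-kernel is finite. -/
theorem stmt10 (n : ℕ) (β : ℝ) (hβ : IsPisot β) (c : ℤ) (hc : 1 ≤ c)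
    (V E : Type) [Fintype V] [Fintype E] (src tgt : E → V)
    (hout : ∀ v, ∃ e, src e = v)
    (lab : E → Fin n → ℤ) (hlab : ∀ e j, |lab e j| ≤ c)
    (K : V → Set (Fin n → ℝ))
    (hKne : ∀ v, (K v).Nonempty) (hKc : ∀ v, IsCompact (K v))
    (hattr : ∀ u, K u = ⋃ e ∈ {e : E | src e = u}, Sa n β (lab e) '' K (tgt e))
    (I : Finset V) (X : Set (Fin n → ℝ)) (hX : X = ⋃ v ∈ I, K v) :
    (Kernel n β c X).Finite := by
  obtain ⟨hβ1, -, -⟩ := id hβ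
  have hβ0 : (0:ℝ) < β := lt_trans one_pos hβ1
  have hβne : β ≠ 0 := ne_of_gt hβ0
  have hb1 : (0:ℝ) < β - 1 := by linarith
  have hc0 : (0:ℝ) ≤ (c:ℝ) := by exact_mod_cast (le_trans zero_le_one hc)
  have hcb : (0:ℝ) ≤ (c:ℝ) / (β - 1) := div_nonneg hc0 (le_of_lt hb1)
  -- a uniform bound on the attractor pieces
  have hbd : ∃ R : ℝ, 0 ≤ R ∧ ∀ v, ∀ x ∈ K v, ∀ j, |x j| ≤ R := by
    have h1 : ∀ v, ∃ Rv : ℝ, ∀ x ∈ K v, ‖x‖ ≤ Rv := fun v =>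
      (isBounded_iff_forall_norm_le).mp (hKc v).isBounded
    choose Rv hRv using h1
    refine ⟨∑ v : V, max (Rv v) 0, Finset.sum_nonneg fun _ _ => le_max_right _ _, ?_⟩
    intro v x hx j
    calc |x j| = ‖x j‖ := rfl
      _ ≤ ‖x‖ := norm_le_pi_norm x j
      _ ≤ Rv v := hRv v x hx
      _ ≤ max (Rv v) 0 := le_max_left _ _
      _ ≤ ∑ v : V, max (Rv v) 0 :=
          Finset.single_le_sum (f := fun v => max (Rv v) 0)
            (fun _ _ => le_max_right _ _) (Finset.mem_univ v)
  obtain ⟨R, hR0, hR⟩ := hbd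
  -- the attractor lies in the cube
  have hcube : ∀ v, ∀ x ∈ K v, ∀ j, |x j| ≤ (c:ℝ) / (β - 1) := by
    have key : ∀ m : ℕ, ∀ v, ∀ x ∈ K v, ∀ j, |x j| ≤ R / β ^ m + (c:ℝ) / (β - 1) := by
      intro m
      induction m with
      | zero =>
        intro v x hx j
        simpa using le_trans (hR v x hx j) (by linarith)
      | succ m IH =>
        intro v x hx j
        rw [hattr v] at hx
        simp only [Set.mem_iUnion, Set.mem_image, Set.mem_setOf_eq, exists_prop] at hx
        obtain ⟨e, he, z, hz, hxz⟩ := hx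
        have hxj : x j = (z j + (lab e j : ℝ)) / β := by rw [← hxz]; rfl
        have hle : |(lab e j : ℝ)| ≤ (c:ℝ) := by exact_mod_cast hlab e j
        have h1 : |x j| ≤ (|z j| + (c:ℝ)) / β := by
          rw [hxj, abs_div, abs_of_pos hβ0]
          gcongr
          exact (abs_add_le _ _).trans (by linarith)
        have h2 := IH (tgt e) z hz j
        have h3 : (R / β ^ m + (c:ℝ) / (β - 1) + c) / β = R / β ^ (m + 1) + (c:ℝ) / (β - 1) := by
          field_simp
          ring
        calc |x j| ≤ (|z j| + (c:ℝ)) / β := h1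
          _ ≤ (R / β ^ m + (c:ℝ) / (β - 1) + c) / β := by
              gcongr
          _ = R / β ^ (m + 1) + (c:ℝ) / (β - 1) := h3
    intro v x hx j
    refine le_of_forall_pos_le_add fun ε hε => ?_
    obtain ⟨m, hm⟩ := pow_unbounded_of_one_lt (R / ε) hβ1
    have hβm : (0:ℝ) < β ^ m := pow_pos hβ0 m
    have : R / β ^ m ≤ ε := le_of_lt ((div_lt_iff₀ hβm).mpr (by
      have := (div_lt_iff₀ hε).mp hm
      linarith))
    have h4 := key m v x hx j
    linarith
  -- path decomposition of the attractor equation, iterated k times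
  have hdecomp : ∀ (k : ℕ) (v : V), ∀ x ∈ K v, ∃ (w : V) (A : ℕ → Fin n → ℤ),
      (∀ i j, |A i j| ≤ c) ∧
      (∃ y ∈ K w, ∀ j, β ^ k * x j = y j + ∑ i ∈ Finset.range k, (A i j : ℝ) * β ^ i) ∧
      (∀ y ∈ K w, ∃ x' ∈ K v, ∀ j,
        β ^ k * x' j = y j + ∑ i ∈ Finset.range k, (A i j : ℝ) * β ^ i) := by
    intro k
    induction k with
    | zero =>
      intro v x hx
      exact ⟨v, 0, fun i j => by simp; linarith, ⟨x, hx, by simp⟩, fun y hy => ⟨y, hy, by simp⟩⟩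
    | succ k IH =>
      intro v x hx
      rw [hattr v] at hx
      simp only [Set.mem_iUnion, Set.mem_image, Set.mem_setOf_eq, exists_prop] at hx
      obtain ⟨e, he, z, hz, hxz⟩ := hx
      obtain ⟨w, A, hA, ⟨y, hy, hfwd⟩, hbwd⟩ := IH (tgt e) z hz
      set A' : ℕ → Fin n → ℤ := fun i => if i = k then lab e else A i with hA'
      have hsum : ∀ j, ∑ i ∈ Finset.range (k+1), ((A' i j : ℤ) : ℝ) * β ^ i
          = (∑ i ∈ Finset.range k, ((A i j : ℤ) : ℝ) * β ^ i) + (lab e j : ℝ) * β ^ k := by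
        intro j
        rw [Finset.sum_range_succ]
        congr 1
        · refine Finset.sum_congr rfl fun i hi => ?_
          rw [hA']
          simp only [if_neg (Nat.ne_of_lt (Finset.mem_range.mp hi))]
        · rw [hA']; simp
      have hA'bd : ∀ i j, |A' i j| ≤ c := by
        intro i j
        rw [hA']
        by_cases h : i = k <;> simp [h, hlab, hA]
      have hstep : ∀ u : Fin n → ℝ, ∀ uz : Fin n → ℝ, Sa n β (lab e) uz = u →
          ∀ j, β ^ (k+1) * u j = β ^ k * uz j + (lab e j : ℝ) * β ^ k := by
        intro u uz huz j
        have : u j = (uz j + (lab e j : ℝ)) / β := by rw [← huz]; rfl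
        rw [this]
        field_simp
        ring
      refine ⟨w, A', hA'bd, ⟨y, hy, ?_⟩, ?_⟩
      · intro j
        rw [hsum j, hstep x z hxz j, hfwd j]
        ring
      · intro y' hy'
        obtain ⟨z', hz', hz'eq⟩ := hbwd y' hy'
        refine ⟨Sa n β (lab e) z', ?_, ?_⟩
        · rw [hattr v]
          simp only [Set.mem_iUnion, Set.mem_image, Set.mem_setOf_eq, exists_prop]
          exact ⟨e, he, z', hz', rfl⟩
        · intro j
          rw [hsum j, hstep (Sa n β (lab e) z') z' rfl j, hz'eq j]
          ring
  -- the finite set of translation amounts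
  set F : Set ℝ := {t : ℝ | (∃ k, t ∈ PolyVal β (2*c) k) ∧ |t| ≤ 2*(c:ℝ) / (β - 1)} with hF
  have hFfin : F.Finite := polyval_bounded_finite β hβ (2*c) (2*(c:ℝ) / (β - 1))
  have hTfin : {t : Fin n → ℝ | ∀ j, t j ∈ F}.Finite := by
    have : {t : Fin n → ℝ | ∀ j, t j ∈ F} = Set.pi Set.univ (fun _ => F) := by
      ext t; simp [Set.mem_pi]
    rw [this]
    exact Set.Finite.pi fun _ => hFfin
  set Pieces : Set (Set (Fin n → ℝ)) :=
    (fun p : V × (Fin n → ℝ) =>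
      ((fun y : Fin n → ℝ => fun j => y j + p.2 j) '' K p.1) ∩ cube n (c:ℝ) β) ''
      (Set.univ ×ˢ {t : Fin n → ℝ | ∀ j, t j ∈ F}) with hPieces
  have hPfin : Pieces.Finite := (Set.finite_univ.prod hTfin).image _
  have hUfin : (Set.sUnion '' {S | S ⊆ Pieces}).Finite := hPfin.finite_subsets.image _
  refine Set.Finite.subset hUfin ?_
  rintro Y ⟨k, b, hb, rfl⟩
  set Y : Set (Fin n → ℝ) :=
    ((fun x : Fin n → ℝ => fun j => β ^ k * x j - b j) '' X) ∩ cube n (c:ℝ) β with hY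
  refine ⟨{P | P ∈ Pieces ∧ P ⊆ Y}, fun P hP => hP.1, ?_⟩
  apply Set.Subset.antisymm
  · exact Set.sUnion_subset fun P hP => hP.2
  · -- Y is covered by the pieces it contains
    rintro p ⟨⟨x, hxX, rfl⟩, hpc⟩
    rw [hX] at hxX
    simp only [Set.mem_iUnion, exists_prop] at hxX
    obtain ⟨v, hvI, hxv⟩ := hxX
    choose Ba hBa1 hBa2 using hb
    obtain ⟨w, A, hA, ⟨y, hy, hfwd⟩, hbwd⟩ := hdecomp k v x hxv
    set t : Fin n → ℝ := fun j => ∑ i ∈ Finset.range k, ((A i j - Ba j i : ℤ) : ℝ) * β ^ i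
      with ht
    have hsplit : ∀ j, (∑ i ∈ Finset.range k, ((A i j : ℝ) - (Ba j i : ℝ)) * β ^ i)
        = (∑ i ∈ Finset.range k, (A i j : ℝ) * β ^ i)
          - ∑ i ∈ Finset.range k, (Ba j i : ℝ) * β ^ i := by
      intro j
      rw [← Finset.sum_sub_distrib]
      exact Finset.sum_congr rfl fun i _ => by ring
    have htj : ∀ j, β ^ k * x j - b j = y j + t j := by
      intro j
      rw [ht, hBa2 j, hfwd j]
      push_cast
      rw [hsplit j]
      ring
    set P : Set (Fin n → ℝ) :=
      ((fun y : Fin n → ℝ => fun j => y j + t j) '' K w) ∩ cube n (c:ℝ) β with hP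
    have hpmem : (fun j => β ^ k * x j - b j) ∈ P := by
      refine ⟨⟨y, hy, ?_⟩, hpc⟩
      funext j
      exact (htj j).symm
    have hpcube : ∀ j, |β ^ k * x j - b j| ≤ (c:ℝ) / (β - 1) := by
      intro j
      obtain ⟨h1, h2⟩ := hpc
      exact abs_le.mpr ⟨by simpa using h1 j, h2 j⟩
    have htF : ∀ j, t j ∈ F := by
      intro j
      constructor
      · refine ⟨k, fun i => A i j - Ba j i, fun i => ?_, rfl⟩
        calc |A i j - Ba j i| ≤ |A i j| + |Ba j i| := abs_sub _ _
          _ ≤ c + c := add_le_add (hA i j) (hBa1 j i)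
          _ = 2 * c := by ring
      · have h1 := hpcube j
        have h2 := hcube w y hy j
        have h3 : t j = (β ^ k * x j - b j) - y j := by rw [htj j]; ring
        rw [h3]
        calc |(β ^ k * x j - b j) - y j| ≤ |β ^ k * x j - b j| + |y j| := abs_sub _ _
          _ ≤ (c:ℝ) / (β - 1) + (c:ℝ) / (β - 1) := add_le_add h1 h2
          _ = 2*(c:ℝ) / (β - 1) := by ring
    have hPP : P ∈ Pieces := ⟨(w, t), ⟨Set.mem_univ _, htF⟩, rfl⟩
    have hPY : P ⊆ Y := by
      rintro q ⟨⟨y', hy', rfl⟩, hqc⟩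
      obtain ⟨x', hx'v, hx'eq⟩ := hbwd y' hy'
      refine ⟨⟨x', ?_, ?_⟩, hqc⟩
      · rw [hX]
        simp only [Set.mem_iUnion, exists_prop]
        exact ⟨v, hvI, hx'v⟩
      · funext j
        show β ^ k * x' j - b j = y' j + t j
        rw [hBa2 j]
        simp only [ht]
        push_cast
        rw [hsplit j]
        linarith [hx'eq j]
    exact Set.mem_sUnion.mpr ⟨P, ⟨hPP, hPY⟩, hpmem⟩
end

section
/- (Parry's criterion, one direction.) Let β > 1 and let d*_β(1) be the quasi-greedy expansion of 1. If u = u_1 u_2 u_3 ⋯ is an infinite word over {0,...,⌈β⌉−1} that is the greedy β-expansion of some x ∈ [0,1), then for every m ≥ 0, the shifted word σ^m(u) = u_{m+1} u_{m+2} ⋯ is lexicographically strictly smaller than d*_β(1). -/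
open Finset Filter Topology

lemma lex_tri {a b : ℕ → ℕ} (hne : a ≠ b) : LexLT a b ∨ LexLT b a := by
  classical
  have h : ∃ n, a n ≠ b n := by
    by_contra h; push_neg at h; exact hne (funext h)
  set p := Nat.find h with hp
  have hps : a p ≠ b p := Nat.find_spec h
  have hag : ∀ i < p, a i = b i := fun i hi => by
    have := Nat.find_min h hi; simpa using this
  rcases lt_or_gt_of_ne hps with h1 | h1
  · exact Or.inl ⟨p, hag, h1⟩
  · exact Or.inr ⟨p, fun i hi => (hag i hi).symm, h1⟩

lemma hasSum_geom_div {β : ℝ} (hβ : 1 < β) (C : ℝ) :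
    HasSum (fun i : ℕ => C / β ^ (i + 1)) (C / (β - 1)) := by
  have hβ0 : (0 : ℝ) < β := lt_trans one_pos hβ
  have hβ1 : β - 1 ≠ 0 := ne_of_gt (by linarith)
  have h := (hasSum_geometric_of_lt_one (by positivity) ((div_lt_one hβ0).2 hβ)).mul_left (C / β)
  have heq : (fun i : ℕ => C / β * (1 / β) ^ i) = fun i : ℕ => C / β ^ (i + 1) := by
    funext i
    rw [div_pow, one_pow, div_mul_div_comm, mul_one, ← pow_succ']
  rw [heq] at h
  rw [one_sub_div hβ0.ne', inv_div, div_mul_div_comm, mul_comm β (β - 1), mul_div_mul_right _ _ hβ0.ne'] at h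
  exact h

lemma quasiGreedy {β : ℝ} (hβ : 1 < β) {y : ℝ} (hy0 : 0 < y)
    (hyM : y ≤ ((⌈β⌉₊ - 1 : ℕ) : ℝ) / (β - 1)) :
    ∃ e : ℕ → ℕ, (∀ j, e j ≤ ⌈β⌉₊ - 1) ∧
      HasSum (fun j : ℕ => (e j : ℝ) / β ^ (j + 1)) y ∧
      (∀ N, ∃ j ≥ N, e j ≠ 0) := by
  classical
  have hβ0 : (0 : ℝ) < β := lt_trans one_pos hβ
  have hβ1 : β - 1 > 0 := by linarith
  set C : ℕ := ⌈β⌉₊ - 1 with hC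
  have hC2 : 2 ≤ ⌈β⌉₊ := by
    have : (1 : ℕ) < ⌈β⌉₊ := by
      rw [Nat.lt_ceil]; exact_mod_cast hβ
    omega
  have hCcast : (C : ℝ) = (⌈β⌉₊ : ℝ) - 1 := by
    rw [hC]; push_cast [Nat.cast_sub (by omega : 1 ≤ ⌈β⌉₊)]; ring
  have hCge : β - 1 ≤ (C : ℝ) := by
    rw [hCcast]; have := Nat.le_ceil β; linarith
  set M : ℝ := (C : ℝ) / (β - 1) with hM
  have hM1 : 1 ≤ M := by
    rw [hM, le_div_iff₀ hβ1]; linarith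
  have hMC : β * M - (C : ℝ) = M := by
    rw [hM]; field_simp; ring
  -- one step of the algorithm
  set F : ℝ → ℝ := fun z => β * z - ((min C (⌈β * z⌉₊ - 1) : ℕ) : ℝ) with hF
  set Y : ℕ → ℝ := fun j => F^[j] y with hY
  have hY0 : Y 0 = y := rfl
  have hYs : ∀ j, Y (j + 1) = F (Y j) := by
    intro j; rw [hY]; simp [Function.iterate_succ_apply']
  set E : ℕ → ℕ := fun j => min C (⌈β * Y j⌉₊ - 1) with hE
  have hstep : ∀ z : ℝ, 0 < z → z ≤ M → 0 < F z ∧ F z ≤ M := by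
    intro z hz0 hzM
    have hbz : 0 < β * z := by positivity
    have hce1 : 1 ≤ ⌈β * z⌉₊ := Nat.one_le_ceil_iff.2 hbz
    have hcast : ((⌈β * z⌉₊ - 1 : ℕ) : ℝ) = (⌈β * z⌉₊ : ℝ) - 1 := by
      push_cast [Nat.cast_sub hce1]; ring
    have hlt : ((⌈β * z⌉₊ - 1 : ℕ) : ℝ) < β * z := by
      rw [hcast]
      have := Nat.ceil_lt_add_one (le_of_lt hbz)
      linarith
    constructor
    · have hle : ((min C (⌈β * z⌉₊ - 1) : ℕ) : ℝ) ≤ ((⌈β * z⌉₊ - 1 : ℕ) : ℝ) := by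
        exact_mod_cast Nat.cast_le.2 (min_le_right _ _)
      rw [hF]; dsimp only; linarith
    · rcases le_or_gt C (⌈β * z⌉₊ - 1) with hc | hc
      · rw [hF]; dsimp only
        rw [min_eq_left hc]
        have : β * z ≤ β * M := by nlinarith
        linarith
      · rw [hF]; dsimp only
        rw [min_eq_right (le_of_lt hc)]
        have hub : β * z ≤ (⌈β * z⌉₊ : ℝ) := Nat.le_ceil _
        rw [hcast]
        linarith
  have hinv : ∀ j, 0 < Y j ∧ Y j ≤ M := by
    intro j; induction j with
    | zero => rw [hY0]; exact ⟨hy0, hyM⟩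
    | succ n ih => rw [hYs]; exact hstep _ ih.1 ih.2
  have hYrec : ∀ j, Y (j + 1) = β * Y j - (E j : ℝ) := fun j => hYs j
  have hEC : ∀ j, E j ≤ C := fun j => min_le_left _ _
  -- partial sums
  have hpart : ∀ n, ∑ j ∈ Finset.range n, (E j : ℝ) / β ^ (j + 1) = y - Y n / β ^ n := by
    intro n; induction n with
    | zero => simp [hY0]
    | succ n ih =>
      rw [Finset.sum_range_succ, ih, hYrec n]
      have hpn : (β : ℝ) ^ n ≠ 0 := by positivity
      field_simp
      ring
  have hEnonneg : ∀ j, (0 : ℝ) ≤ (E j : ℝ) / β ^ (j + 1) := by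
    intro j; positivity
  have hEle : ∀ j, (E j : ℝ) / β ^ (j + 1) ≤ (C : ℝ) / β ^ (j + 1) := by
    intro j
    apply div_le_div_of_nonneg_right _ (by positivity)
    · exact_mod_cast hEC j
  -- summability
  have hsumm : Summable (fun j : ℕ => (E j : ℝ) / β ^ (j + 1)) :=
    Summable.of_nonneg_of_le hEnonneg hEle (hasSum_geom_div hβ (C : ℝ)).summable
  -- tendsto of tails
  have htail : Tendsto (fun n => Y n / β ^ n) atTop (nhds 0) := by
    apply squeeze_zero (fun n => by
      have := (hinv n).1
      positivity)
      (fun n => by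
        have h1 := (hinv n).2
        exact div_le_div_of_nonneg_right h1 (by positivity) |>.trans_eq rfl)
    have h2 : Tendsto (fun n : ℕ => M * (1 / β) ^ n) atTop (nhds 0) := by
      have := (tendsto_pow_atTop_nhds_zero_of_lt_one
        (by positivity) ((div_lt_one hβ0).2 hβ)).const_mul M
      simpa using this
    convert h2 using 2 with n
    rw [div_pow, one_pow]
    field_simp
  have hHS : HasSum (fun j : ℕ => (E j : ℝ) / β ^ (j + 1)) y := by
    rw [hsumm.hasSum_iff_tendsto_nat]
    have : Tendsto (fun n => y - Y n / β ^ n) atTop (nhds (y - 0)) :=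
      (tendsto_const_nhds).sub htail
    simp only [sub_zero] at this
    exact Tendsto.congr (fun n => (hpart n).symm) this
  refine ⟨E, hEC, hHS, ?_⟩
  intro N
  by_contra hcon
  push_neg at hcon
  have hz : ∀ m, Y (N + m) = β ^ m * Y N := by
    intro m; induction m with
    | zero => simp
    | succ n ih =>
      have hEz : E (N + n) = 0 := hcon (N + n) (Nat.le_add_right _ _)
      rw [show N + (n + 1) = (N + n) + 1 by ring, hYrec, hEz, ih, pow_succ]
      push_cast
      ring
  obtain ⟨m, hm⟩ := ((tendsto_pow_atTop_atTop_of_one_lt hβ).eventually_ge_atTop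
    (M / Y N + 1)).exists
  have hYN := (hinv N).1
  have : M < Y (N + m) := by
    rw [hz m]
    have h1 : M / Y N < β ^ m := by linarith
    calc M = (M / Y N) * Y N := by field_simp
    _ < β ^ m * Y N := by
        apply mul_lt_mul_of_pos_right h1 hYN
  exact absurd (hinv (N + m)).2 (not_le.2 this)

lemma tails {β : ℝ} (hβ : 1 < β) {d : ℕ → ℕ} (hd : IsRenyiExpansionOfOne β d) :
    ∃ S : ℕ → ℝ, (∀ n, 0 < S n) ∧ (∀ n, S n ≤ 1) ∧
      (∀ n, (∑ i ∈ Finset.range n, (d i : ℝ) / β ^ (i + 1)) + S n / β ^ n = 1) := by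
  classical
  have hβ0 : (0 : ℝ) < β := lt_trans one_pos hβ
  have hβ1 : β - 1 > 0 := by linarith
  set C : ℕ := ⌈β⌉₊ - 1 with hCdef
  set M : ℝ := (C : ℝ) / (β - 1) with hM
  obtain ⟨hbd, hsum1, hinf, hmax⟩ := hd
  set S : ℕ → ℝ := fun n => ∑' i, (d (n + i) : ℝ) / β ^ (i + 1) with hS
  have hnn : ∀ n i, (0 : ℝ) ≤ (d (n + i) : ℝ) / β ^ (i + 1) := by intro n i; positivity
  have hle : ∀ n i, (d (n + i) : ℝ) / β ^ (i + 1) ≤ (C : ℝ) / β ^ (i + 1) := by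
    intro n i
    apply div_le_div_of_nonneg_right _ (by positivity)
    exact_mod_cast hbd (n + i)
  have hsummable : ∀ n, Summable (fun i : ℕ => (d (n + i) : ℝ) / β ^ (i + 1)) := fun n =>
    Summable.of_nonneg_of_le (hnn n) (hle n) (hasSum_geom_div hβ (C : ℝ)).summable
  have hHS : ∀ n, HasSum (fun i : ℕ => (d (n + i) : ℝ) / β ^ (i + 1)) (S n) := fun n =>
    (hsummable n).hasSum
  have hS0 : S 0 = 1 := by
    rw [hS]; dsimp only
    rw [← hsum1.tsum_eq]
    exact tsum_congr (fun i => by rw [Nat.zero_add])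
  have hrec : ∀ n, S n = (d n : ℝ) / β + S (n + 1) / β := by
    intro n
    rw [hS]; dsimp only
    rw [Summable.tsum_eq_zero_add (hsummable n)]
    congr 1
    · norm_num
    · have he : (fun i : ℕ => (d (n + (i + 1)) : ℝ) / β ^ (i + 1 + 1)) =
          fun i : ℕ => ((d (n + 1 + i) : ℝ) / β ^ (i + 1)) / β := by
        funext i
        rw [show n + (i + 1) = n + 1 + i by ring, pow_succ]
        ring
      rw [he, tsum_div_const]
  have hSM : ∀ n, S n ≤ M := by
    intro n
    exact hasSum_le (hle n) (hHS n) (hasSum_geom_div hβ (C : ℝ))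
  have hSpos : ∀ n, 0 < S n := by
    intro n
    obtain ⟨i, hiN, hi0⟩ := hinf n
    have hterm : 0 < (d (n + (i - n)) : ℝ) / β ^ ((i - n) + 1) := by
      have : d (n + (i - n)) ≠ 0 := by rwa [Nat.add_sub_cancel' hiN]
      have h1 : (0 : ℝ) < (d (n + (i - n)) : ℝ) := by
        exact_mod_cast Nat.pos_of_ne_zero this
      positivity
    exact Summable.tsum_pos (hsummable n) (hnn n) _ hterm
  have hid : ∀ n, (∑ i ∈ Finset.range n, (d i : ℝ) / β ^ (i + 1)) + S n / β ^ n = 1 := by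
    intro n
    induction n with
    | zero => simpa using hS0
    | succ n ih =>
      rw [Finset.sum_range_succ]
      rw [hrec n] at ih
      have hpn : (β : ℝ) ^ n ≠ 0 := by positivity
      rw [pow_succ]
      field_simp at ih ⊢
      linarith [ih]
  refine ⟨S, hSpos, ?_, hid⟩
  -- the hard part: S n ≤ 1
  by_contra hcon
  push_neg at hcon
  have hk : 1 < S (Nat.find hcon) := Nat.find_spec hcon
  have hmin : ∀ m, m < Nat.find hcon → ¬ 1 < S m := fun m hm => Nat.find_min hcon hm
  obtain ⟨kk, hkk⟩ : ∃ kk, Nat.find hcon = kk + 1 := by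
    have : Nat.find hcon ≠ 0 := by intro h0; rw [h0, hS0] at hk; exact lt_irrefl 1 hk
    exact ⟨Nat.find hcon - 1, by omega⟩
  rw [hkk] at hk
  have hkkle : S kk ≤ 1 := le_of_not_gt (hmin kk (by rw [hkk]; omega))
  -- digit bound at kk
  have hrk := hrec kk
  have hdklt : (d kk : ℝ) + 1 < β := by
    have h1 : (d kk : ℝ) + S (kk + 1) = β * S kk := by
      rw [hrk]; field_simp
    nlinarith [hk, hkkle, hβ0]
  have hdkC : d kk + 1 ≤ C := by
    have h2 : ((d kk : ℕ) : ℝ) + 1 < (⌈β⌉₊ : ℝ) := lt_of_lt_of_le hdklt (Nat.le_ceil β)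
    have h3 : d kk + 1 < ⌈β⌉₊ := by exact_mod_cast h2
    omega
  -- residual value
  set y : ℝ := S (kk + 1) - 1 with hy
  have hy0 : 0 < y := by rw [hy]; linarith [hk]
  have hC2 : 2 ≤ ⌈β⌉₊ := by
    have : (1 : ℕ) < ⌈β⌉₊ := by rw [Nat.lt_ceil]; exact_mod_cast hβ
    omega
  have hM1 : 1 ≤ M := by
    rw [hM, le_div_iff₀ hβ1]
    have h4 : (C : ℝ) = (⌈β⌉₊ : ℝ) - 1 := by
      rw [hCdef]; push_cast [Nat.cast_sub (by omega : 1 ≤ ⌈β⌉₊)]; ring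
    have := Nat.le_ceil β
    rw [h4]; linarith
  have hyM : y ≤ M := by rw [hy]; linarith [hSM (kk + 1)]
  obtain ⟨e, heC, heHS, heinf⟩ := quasiGreedy hβ hy0 hyM
  -- the competitor
  set d' : ℕ → ℕ := fun i => if i < kk then d i else if i = kk then d kk + 1 else e (i - kk - 1)
    with hd'
  have hd'lt : ∀ i, i < kk → d' i = d i := by intro i hi; simp [hd', hi]
  have hd'k : d' kk = d kk + 1 := by simp [hd']
  have hd'gt : ∀ j, d' (j + (kk + 1)) = e j := by
    intro j
    have h1 : ¬ (j + (kk + 1) < kk) := by omega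
    have h2 : ¬ (j + (kk + 1) = kk) := by omega
    simp only [hd', h1, h2, if_false]
    congr 1
    omega
  have hbd' : ∀ i, d' i ≤ ⌈β⌉₊ - 1 := by
    intro i
    rcases lt_trichotomy i kk with h | h | h
    · rw [hd'lt i h]; exact hbd i
    · rw [h, hd'k]; exact hdkC
    · obtain ⟨j, rfl⟩ : ∃ j, i = j + (kk + 1) := ⟨i - kk - 1, by omega⟩
      rw [hd'gt]; exact heC j
  have hinf' : ∀ N, ∃ i ≥ N, d' i ≠ 0 := by
    intro N
    obtain ⟨j, hjN, hj0⟩ := heinf N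
    exact ⟨j + (kk + 1), by omega, by rw [hd'gt]; exact hj0⟩
  have hHS' : HasSum (fun i : ℕ => (d' i : ℝ) / β ^ (i + 1)) 1 := by
    have h1 : HasSum (fun j : ℕ => (d' (j + (kk + 1)) : ℝ) / β ^ (j + (kk + 1) + 1))
        (y / β ^ (kk + 1)) := by
      have h2 := heHS.div_const (β ^ (kk + 1))
      have heq : (fun j : ℕ => (d' (j + (kk + 1)) : ℝ) / β ^ (j + (kk + 1) + 1)) =
          fun j : ℕ => ((e j : ℝ) / β ^ (j + 1)) / β ^ (kk + 1) := by
        funext j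
        rw [hd'gt j, div_div, ← pow_add]
        congr 2
        omega
      rw [heq]; exact h2
    have h3 := (hasSum_nat_add_iff (f := fun i : ℕ => (d' i : ℝ) / β ^ (i + 1)) (kk + 1)).1 h1
    have h4 : y / β ^ (kk + 1) + ∑ i ∈ Finset.range (kk + 1), (d' i : ℝ) / β ^ (i + 1) = 1 := by
      have h5 : ∑ i ∈ Finset.range (kk + 1), (d' i : ℝ) / β ^ (i + 1) =
          (∑ i ∈ Finset.range kk, (d i : ℝ) / β ^ (i + 1)) + ((d kk : ℝ) + 1) / β ^ (kk + 1) := by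
        rw [Finset.sum_range_succ, hd'k]
        congr 1
        · apply Finset.sum_congr rfl
          intro i hi
          rw [hd'lt i (Finset.mem_range.1 hi)]
        · push_cast; ring
      have h6 := hid (kk + 1)
      rw [Finset.sum_range_succ] at h6
      rw [h5, hy]
      have hpk : (β : ℝ) ^ (kk + 1) ≠ 0 := by positivity
      field_simp at h6 ⊢
      linarith [h6]
    rw [h4] at h3
    exact h3
  have hlex := hmax d' hbd' hHS' hinf'
  rcases hlex with heq | ⟨p, hag, hplt⟩
  · have := congrFun heq kk
    rw [hd'k] at this
    omega
  · rcases lt_trichotomy p kk with h | h | h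
    · rw [hd'lt p h] at hplt; omega
    · rw [h, hd'k] at hplt; omega
    · have := hag kk h
      rw [hd'k] at this
      omega

/-- Parry's criterion, one direction: if u is the greedy
β-expansion of some x ∈ [0,1), produced by the β-transformation T(x) = βx - ⌊βx⌋
with digits u_m = ⌊β T^m(x)⌋, then every shift of u is lexicographically strictly
smaller than d*_β(1). -/
theorem stmt12 (β : ℝ) (hβ : 1 < β) (d : ℕ → ℕ) (hd : IsRenyiExpansionOfOne β d)
    (x : ℝ) (hx0 : 0 ≤ x) (hx1 : x < 1)
    (u : ℕ → ℕ) (t : ℕ → ℝ) (ht0 : t 0 = x)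
    (hu : ∀ m, (u m : ℤ) = ⌊β * t m⌋)
    (ht : ∀ m, t (m + 1) = β * t m - ⌊β * t m⌋) :
    ∀ m, LexLT (fun i => u (m + i)) d := by
  have hβ0 : (0 : ℝ) < β := lt_trans one_pos hβ
  obtain ⟨S, hSpos, hSle, hid⟩ := tails hβ hd
  -- t stays in [0,1)
  have htin : ∀ n, 0 ≤ t n ∧ t n < 1 := by
    intro n
    induction n with
    | zero => rw [ht0]; exact ⟨hx0, hx1⟩
    | succ n _ =>
      rw [ht n]
      constructor
      · have := Int.fract_nonneg (β * t n)
        rw [Int.fract] at this; exact this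
      · have := Int.fract_lt_one (β * t n)
        rw [Int.fract] at this; exact this
  -- recurrence
  have hrec : ∀ n, β * t n = (u n : ℝ) + t (n + 1) := by
    intro n
    have h1 := ht n
    have h2 : ((u n : ℤ) : ℝ) = ((⌊β * t n⌋ : ℤ) : ℝ) := by rw [hu n]
    push_cast at h2
    rw [h1, ← h2]
    ring
  intro m
  -- partial expansion of t m
  have hpartial : ∀ k, t m = (∑ i ∈ Finset.range k, (u (m + i) : ℝ) / β ^ (i + 1)) +
      t (m + k) / β ^ k := by
    intro k
    induction k with
    | zero => simp
    | succ k ih =>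
      rw [Finset.sum_range_succ]
      have h3 : t (m + k) = ((u (m + k) : ℝ) + t (m + k + 1)) / β := by
        have := hrec (m + k)
        field_simp
        linarith
      rw [ih, h3]
      have hpk : (β : ℝ) ^ k ≠ 0 := by positivity
      rw [show m + (k + 1) = m + k + 1 from rfl, pow_succ]
      field_simp
      ring
  by_contra hcon
  rcases eq_or_ne (fun i => u (m + i)) d with heq | hne2
  · -- equal case: t m = 1, contradiction
    have hgeq : ∀ k, 1 - 1 / β ^ k ≤ t m := by
      intro k
      have h4 := hpartial k
      have h5 : ∑ i ∈ Finset.range k, (u (m + i) : ℝ) / β ^ (i + 1) =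
          ∑ i ∈ Finset.range k, (d i : ℝ) / β ^ (i + 1) := by
        apply Finset.sum_congr rfl
        intro i _
        rw [← congrFun heq i]
      have h6 := hid k
      have h7 : S k / β ^ k ≤ 1 / β ^ k :=
        div_le_div_of_nonneg_right (hSle k) (by positivity) |>.trans_eq rfl
      have h8 : 0 ≤ t (m + k) / β ^ k := by
        have := (htin (m + k)).1; positivity
      rw [h4, h5]
      linarith
    have hlim : Tendsto (fun k : ℕ => 1 - 1 / β ^ k) atTop (nhds 1) := by
      have h9 : Tendsto (fun k : ℕ => (1 / β) ^ k) atTop (nhds 0) :=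
        tendsto_pow_atTop_nhds_zero_of_lt_one (by positivity) ((div_lt_one hβ0).2 hβ)
      have h10 : Tendsto (fun k : ℕ => 1 - (1 / β) ^ k) atTop (nhds (1 - 0)) :=
        tendsto_const_nhds.sub h9
      simp only [sub_zero] at h10
      convert h10 using 2 with k
      rw [div_pow, one_pow]
    have h11 : 1 ≤ t m := le_of_tendsto' hlim hgeq
    exact absurd (htin m).2 (not_lt.2 h11)
  · -- strictly greater case
    rcases lex_tri hne2 with h | ⟨p, hag, hplt⟩
    · exact hcon h
    · -- d p < u (m + p), agreement below p
      simp only at hplt hag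
      have h12 := hpartial (p + 1)
      rw [Finset.sum_range_succ] at h12
      have h13 : ∑ i ∈ Finset.range p, (u (m + i) : ℝ) / β ^ (i + 1) =
          ∑ i ∈ Finset.range p, (d i : ℝ) / β ^ (i + 1) := by
        apply Finset.sum_congr rfl
        intro i hi
        rw [(hag i (Finset.mem_range.1 hi)).symm]
      have h14 : (d p : ℝ) + 1 ≤ (u (m + p) : ℝ) := by
        have : d p + 1 ≤ u (m + p) := hplt
        exact_mod_cast this
      have h15 := hid (p + 1)
      rw [Finset.sum_range_succ] at h15
      have h16 : S (p + 1) / β ^ (p + 1) ≤ 1 / β ^ (p + 1) :=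
        div_le_div_of_nonneg_right (hSle (p + 1)) (by positivity) |>.trans_eq rfl
      have h17 : 0 ≤ t (m + (p + 1)) / β ^ (p + 1) := by
        have := (htin (m + (p + 1))).1; positivity
      have h18 : ((d p : ℝ) + 1) / β ^ (p + 1) ≤ (u (m + p) : ℝ) / β ^ (p + 1) :=
        div_le_div_of_nonneg_right h14 (by positivity) |>.trans_eq rfl
      have h19 : ((d p : ℝ) + 1) / β ^ (p + 1) = (d p : ℝ) / β ^ (p + 1) + 1 / β ^ (p + 1) := by
        ring
      have h20 : 1 ≤ t m := by
        rw [h12, h13]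
        have hS1 := hSpos (p + 1)
        linarith [h15, h16, h17, h18]
      exact absurd (htin m).2 (not_lt.2 h20)
end

section
/- Let b ≥ 2 be an integer and let X ⊆ [0,1]^n be a finite union of closed polyhedra whose vertices have rational coordinates. Then X is b-self-similar: the b-kernel of X, i.e., the collection of sets (b^k X − a) ∩ [0,1]^n over k ≥ 0 and a ∈ ℤ^n with 0 ≤ a_i < b^k, is finite. -/
private lemma aux_clamp_iff (s B v : ℝ) (h1 : -B ≤ s) (h2 : s ≤ B) :
    s ≤ v ↔ s ≤ max (-(B + 1)) (min B v) := by
  constructor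
  · intro h
    exact le_max_of_le_right (le_min h2 h)
  · intro h
    rcases le_max_iff.mp h with h' | h'
    · linarith
    · exact h'.trans (min_le_right _ _)

private lemma aux_den (D : ℕ) (q : ℚ) (h : q.den ∣ D) : ∃ m : ℤ, (D : ℚ) * q = m := by
  obtain ⟨c, hc⟩ := h
  refine ⟨q.num * c, ?_⟩
  have key : ∀ (x : ℚ) (nu : ℤ) (de : ℕ), de ≠ 0 → x = (nu : ℚ) / (de : ℚ) →
      (de : ℚ) * x = (nu : ℚ) := by
    intro x nu de hde he
    have : (de : ℚ) ≠ 0 := by exact_mod_cast hde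
    rw [he]
    field_simp
  have key' := key q q.num q.den q.den_nz (Rat.num_div_den q).symm
  rw [hc]
  push_cast
  rw [mul_right_comm, key']

/-- sum of absolute values of coefficients -/
private def cB (n : ℕ) (c : Fin n → ℚ) : ℚ := ∑ j, |c j|

/-- common denominator of a constraint -/
private def cD (n : ℕ) (c : Fin n → ℚ) (r : ℚ) : ℕ := r.den * ∏ j, (c j).den

/-- clamp of a right-hand-side value -/
private def cC (n : ℕ) (c : Fin n → ℚ) (v : ℚ) : ℚ :=
  max (-(cB n c + 1)) (min (cB n c) v)

/-- finite set of possible clamped right-hand sides -/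
private def cS (n : ℕ) (c : Fin n → ℚ) (r : ℚ) : Set ℚ :=
  {q | (∃ m : ℤ, (cD n c r : ℚ) * q = m) ∧ -(cB n c + 1) ≤ q ∧ q ≤ cB n c}

private lemma cB_nonneg (n : ℕ) (c : Fin n → ℚ) : 0 ≤ cB n c :=
  Finset.sum_nonneg fun j _ => abs_nonneg _

private lemma cS_finite (n : ℕ) (c : Fin n → ℚ) (r : ℚ) : (cS n c r).Finite := by
  have hD0 : (0 : ℚ) < (cD n c r : ℚ) := by
    have : 0 < cD n c r := Nat.mul_pos r.pos (Finset.prod_pos fun j _ => (c j).pos)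
    exact_mod_cast this
  apply Set.Finite.subset
    ((Set.finite_Icc (⌈-(cB n c + 1) * (cD n c r : ℚ)⌉) (⌊cB n c * (cD n c r : ℚ)⌋)).image
      fun m : ℤ => (m : ℚ) / (cD n c r))
  rintro q ⟨⟨m, hm⟩, h1, h2⟩
  refine ⟨m, ?_, ?_⟩
  · rw [Set.mem_Icc]
    constructor
    · rw [Int.ceil_le, ← hm]
      nlinarith
    · rw [Int.le_floor, ← hm]
      nlinarith
  · show ((m : ℤ) : ℚ) / (cD n c r : ℚ) = q
    rw [eq_comm, eq_div_iff (ne_of_gt hD0), mul_comm]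
    exact hm

private lemma cC_mem (n b k : ℕ) (c : Fin n → ℚ) (r : ℚ) (a : Fin n → ℤ) :
    cC n c ((b : ℚ) ^ k * r - ∑ j, c j * (a j : ℚ)) ∈ cS n c r := by
  set D := cD n c r with hD
  have Padd : ∀ {q1 q2 : ℚ}, (∃ m : ℤ, (D:ℚ) * q1 = m) → (∃ m : ℤ, (D:ℚ) * q2 = m) →
      (∃ m : ℤ, (D:ℚ) * (q1 + q2) = m) := by
    rintro q1 q2 ⟨m1, e1⟩ ⟨m2, e2⟩
    exact ⟨m1 + m2, by push_cast; rw [mul_add, e1, e2]⟩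
  have Pzero : (∃ m : ℤ, (D:ℚ) * (0:ℚ) = m) := ⟨0, by push_cast; ring⟩
  have Pneg : ∀ {q : ℚ}, (∃ m : ℤ, (D:ℚ) * q = m) → (∃ m : ℤ, (D:ℚ) * (-q) = m) := by
    rintro q ⟨m, e⟩
    exact ⟨-m, by push_cast; rw [mul_neg, e]⟩
  have Pint : ∀ (z : ℤ) {q : ℚ}, (∃ m : ℤ, (D:ℚ) * q = m) → (∃ m : ℤ, (D:ℚ) * ((z:ℚ) * q) = m) := by
    rintro z q ⟨m, e⟩
    exact ⟨z * m, by push_cast; rw [mul_left_comm, e]⟩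
  have Pmax : ∀ {q1 q2 : ℚ}, (∃ m : ℤ, (D:ℚ) * q1 = m) → (∃ m : ℤ, (D:ℚ) * q2 = m) →
      (∃ m : ℤ, (D:ℚ) * (max q1 q2) = m) := by
    rintro q1 q2 h1 h2
    rcases max_choice q1 q2 with h | h <;> rw [h] <;> assumption
  have Pmin : ∀ {q1 q2 : ℚ}, (∃ m : ℤ, (D:ℚ) * q1 = m) → (∃ m : ℤ, (D:ℚ) * q2 = m) →
      (∃ m : ℤ, (D:ℚ) * (min q1 q2) = m) := by
    rintro q1 q2 h1 h2
    rcases min_choice q1 q2 with h | h <;> rw [h] <;> assumption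
  have Pabs : ∀ {q : ℚ}, (∃ m : ℤ, (D:ℚ) * q = m) → (∃ m : ℤ, (D:ℚ) * |q| = m) := by
    rintro q h
    rw [abs_eq_max_neg]
    exact Pmax h (Pneg h)
  have Pone : (∃ m : ℤ, (D:ℚ) * (1:ℚ) = m) := ⟨D, by push_cast; ring⟩
  have Pr : (∃ m : ℤ, (D:ℚ) * r = m) := aux_den D r (dvd_mul_right _ _)
  have Pc : ∀ j, (∃ m : ℤ, (D:ℚ) * (c j) = m) := fun j =>
    aux_den D (c j) (Dvd.dvd.mul_left (Finset.dvd_prod_of_mem _ (Finset.mem_univ j)) _)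
  have PB : (∃ m : ℤ, (D:ℚ) * cB n c = m) :=
    Finset.sum_induction _ (fun x : ℚ => ∃ m : ℤ, (D:ℚ) * x = m)
      (fun _ _ => Padd) Pzero (fun j _ => Pabs (Pc j))
  have PV : (∃ m : ℤ, (D:ℚ) * ((b : ℚ) ^ k * r - ∑ j, c j * (a j : ℚ)) = m) := by
    have h1 : (b : ℚ) ^ k * r = (((b : ℤ) ^ k : ℤ) : ℚ) * r := by push_cast; ring
    have h2 : (∃ m : ℤ, (D:ℚ) * (∑ j, c j * (a j : ℚ)) = m) := by
      refine Finset.sum_induction _ (fun x : ℚ => ∃ m : ℤ, (D:ℚ) * x = m)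
        (fun _ _ => Padd) Pzero (fun j _ => ?_)
      have : c j * (a j : ℚ) = ((a j : ℤ) : ℚ) * c j := by ring
      rw [this]
      exact Pint _ (Pc j)
    rw [sub_eq_add_neg, h1]
    exact Padd (Pint _ Pr) (Pneg h2)
  have hB0 := cB_nonneg n c
  refine ⟨Pmax (Pneg (Padd PB Pone)) (Pmin PB PV), le_max_left _ _, ?_⟩
  exact max_le (by linarith) (min_le_left _ _)

private lemma cC_iff (n b k : ℕ) (hb : 2 ≤ b) (c : Fin n → ℚ) (r : ℚ) (a : Fin n → ℤ)
    (y : Fin n → ℝ) (hy : ∀ j, 0 ≤ y j ∧ y j ≤ 1) :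
    (∑ j, (c j : ℝ) * ((y j + (a j : ℝ)) / (b : ℝ) ^ k) ≤ (r : ℝ)) ↔
      ∑ j, (c j : ℝ) * y j ≤ ((cC n c ((b : ℚ) ^ k * r - ∑ j, c j * (a j : ℚ)) : ℚ) : ℝ) := by
  have hbkR : (0 : ℝ) < (b : ℝ) ^ k := by
    have : (0:ℝ) < (b:ℝ) := by exact_mod_cast Nat.lt_of_lt_of_le Nat.zero_lt_two hb
    positivity
  -- step 1: rescale
  have hstep1 : (∑ j, (c j : ℝ) * ((y j + (a j : ℝ)) / (b : ℝ) ^ k) ≤ (r : ℝ)) ↔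
      ∑ j, (c j : ℝ) * y j ≤ (((b : ℚ) ^ k * r - ∑ j, c j * (a j : ℚ) : ℚ) : ℝ) := by
    have hcast : (((b : ℚ) ^ k * r - ∑ j, c j * (a j : ℚ) : ℚ) : ℝ)
        = (b : ℝ) ^ k * (r : ℝ) - ∑ j, (c j : ℝ) * (a j : ℝ) := by
      push_cast
      ring
    have hsum : ∑ j, (c j : ℝ) * ((y j + (a j : ℝ)) / (b : ℝ) ^ k)
        = (∑ j, ((c j : ℝ) * y j + (c j : ℝ) * (a j : ℝ))) / (b : ℝ) ^ k := by
      rw [Finset.sum_div]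
      refine Finset.sum_congr rfl fun j _ => ?_
      field_simp
    rw [hcast, hsum, div_le_iff₀ hbkR, Finset.sum_add_distrib]
    constructor <;> intro h <;> nlinarith [h]
  rw [hstep1]
  -- step 2: clamp
  have hBcast : ((cB n c : ℚ) : ℝ) = ∑ j, |(c j : ℝ)| := by
    unfold cB
    push_cast
    rfl
  have hub : ∑ j, (c j : ℝ) * y j ≤ ((cB n c : ℚ) : ℝ) := by
    rw [hBcast]
    refine Finset.sum_le_sum fun j _ => ?_
    obtain ⟨h0, h1⟩ := hy j
    nlinarith [le_abs_self ((c j : ℝ)), abs_nonneg ((c j : ℝ))]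
  have hlb : -((cB n c : ℚ) : ℝ) ≤ ∑ j, (c j : ℝ) * y j := by
    rw [hBcast, ← Finset.sum_neg_distrib]
    refine Finset.sum_le_sum fun j _ => ?_
    obtain ⟨h0, h1⟩ := hy j
    nlinarith [neg_abs_le ((c j : ℝ)), abs_nonneg ((c j : ℝ))]
  have hq : ((cC n c ((b : ℚ) ^ k * r - ∑ j, c j * (a j : ℚ)) : ℚ) : ℝ)
      = max (-(((cB n c : ℚ) : ℝ) + 1))
          (min ((cB n c : ℚ) : ℝ) (((b : ℚ) ^ k * r - ∑ j, c j * (a j : ℚ) : ℚ) : ℝ)) := by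
    unfold cC
    push_cast
    rfl
  rw [hq]
  exact aux_clamp_iff _ _ _ hlb hub

/-- a finite union X ⊆ [0,1]ⁿ of closed rational polyhedra (finite
intersections of rational half-spaces) is b-self-similar: its b-kernel
{(b^k X - a) ∩ [0,1]ⁿ : k ≥ 0, 0 ≤ a_j < b^k} is finite. -/
theorem stmt18 (n b : ℕ) (hb : 2 ≤ b)
    (N : ℕ) (M : Fin N → ℕ)
    (coef : (p : Fin N) → Fin (M p) → Fin n → ℚ)
    (rhs : (p : Fin N) → Fin (M p) → ℚ)
    (X : Set (Fin n → ℝ))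
    (hX : X = ⋃ p : Fin N, ⋂ h : Fin (M p),
      {x : Fin n → ℝ | ∑ j, (coef p h j : ℝ) * x j ≤ (rhs p h : ℝ)})
    (hXsub : X ⊆ Set.Icc (fun _ => (0 : ℝ)) (fun _ => 1)) :
    Set.Finite {Y : Set (Fin n → ℝ) | ∃ (k : ℕ) (a : Fin n → ℤ),
      (∀ j, 0 ≤ a j ∧ a j < (b : ℤ) ^ k) ∧
      Y = ((fun x : Fin n → ℝ => fun j => (b : ℝ) ^ k * x j - (a j : ℝ)) '' X) ∩
        Set.Icc (fun _ => (0 : ℝ)) (fun _ => 1)} := by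
  classical
  set Phi : ((p : Fin N) → Fin (M p) → ℚ) → Set (Fin n → ℝ) := fun q =>
    (⋃ p, ⋂ h, {y : Fin n → ℝ | ∑ j, (coef p h j : ℝ) * y j ≤ (q p h : ℝ)}) ∩
      Set.Icc (fun _ => (0 : ℝ)) (fun _ => 1) with hPhi
  have hT : (Set.pi Set.univ fun p => Set.pi Set.univ fun h =>
      cS n (coef p h) (rhs p h)).Finite :=
    Set.Finite.pi fun p => Set.Finite.pi fun h => cS_finite n (coef p h) (rhs p h)
  apply Set.Finite.subset (hT.image Phi)
  rintro Y ⟨k, a, _, rfl⟩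
  have hbkR : (0 : ℝ) < (b : ℝ) ^ k := by
    have : (0:ℝ) < (b:ℝ) := by exact_mod_cast Nat.lt_of_lt_of_le Nat.zero_lt_two hb
    positivity
  refine ⟨fun p h => cC n (coef p h) ((b : ℚ) ^ k * rhs p h - ∑ j, coef p h j * (a j : ℚ)),
    ?_, ?_⟩
  · intro p _
    intro h _
    exact cC_mem n b k (coef p h) (rhs p h) a
  · -- Phi q = image ∩ Icc
    rw [hPhi]
    have himg : ∀ y : Fin n → ℝ,
        (y ∈ (fun x : Fin n → ℝ => fun j => (b : ℝ) ^ k * x j - (a j : ℝ)) '' X) ↔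
        (fun j => (y j + (a j : ℝ)) / (b : ℝ) ^ k) ∈ X := by
      intro y
      constructor
      · rintro ⟨x, hx, rfl⟩
        convert hx using 1
        funext j
        field_simp
        ring
      · intro hx
        refine ⟨_, hx, ?_⟩
        funext j
        field_simp
        ring
    ext y
    simp only [Set.mem_inter_iff]
    have hiff : y ∈ Set.Icc (fun _ => (0:ℝ)) (fun _ => 1) →
        ((y ∈ ⋃ p, ⋂ h, {y : Fin n → ℝ | ∑ j, (coef p h j : ℝ) * y j ≤
          ((cC n (coef p h) ((b : ℚ) ^ k * rhs p h - ∑ j, coef p h j * (a j : ℚ)) : ℚ) : ℝ)}) ↔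
        y ∈ (fun x : Fin n → ℝ => fun j => (b : ℝ) ^ k * x j - (a j : ℝ)) '' X) := by
      intro hy
      rw [Set.mem_Icc] at hy
      have hy' : ∀ j, 0 ≤ y j ∧ y j ≤ 1 := fun j => ⟨hy.1 j, hy.2 j⟩
      rw [himg, hX]
      simp only [Set.mem_iUnion, Set.mem_iInter, Set.mem_setOf_eq]
      constructor
      · rintro ⟨p, hp⟩
        exact ⟨p, fun h => (cC_iff n b k hb (coef p h) (rhs p h) a y hy').mpr (hp h)⟩
      · rintro ⟨p, hp⟩
        exact ⟨p, fun h => (cC_iff n b k hb (coef p h) (rhs p h) a y hy').mp (hp h)⟩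
    constructor
    · rintro ⟨h1, h2⟩
      exact ⟨(hiff h2).mp h1, h2⟩
    · rintro ⟨h1, h2⟩
      exact ⟨(hiff h2).mpr h1, h2⟩
end
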